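/- Let S and O be nonempty finite sets with n = |S| ≥ 2, let C be a channel from S to O, and let π be a prior on S with exactly k nonzero components (2 ≤ k ≤ n) such that β(π, C) = 0 (equivalently, R*(π, C) = 0 and G(π) > 0). Then for the uniform prior υ on S (υ s = 1/n for all s), one has β(υ, C) ≤ (1 − k/n) / (1 − 1/n). -/
import Mathlib


/-- A channel from secrets `S` to outputs `O`: nonnegative entries, rows sum to 1. -/
def IsChannel {S O : Type*} [Fintype O] (C : S → O → ℝ) : Prop :=
  (∀ s o, 0 ≤ C s o) ∧ ∀ s, ∑ o, C s o = 1

/-- A prior on `S`: nonnegative, sums to 1. -/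
def IsPrior {S : Type*} [Fintype S] (π : S → ℝ) : Prop :=
  (∀ s, 0 ≤ π s) ∧ ∑ s, π s = 1

/-- Bayes risk `R*(π, C) = 1 − ∑_o max_s (π s · C s o)`. -/
noncomputable def bayesRisk {S O : Type*} [Fintype S] [Nonempty S] [Fintype O]
    (π : S → ℝ) (C : S → O → ℝ) : ℝ :=
  1 - ∑ o, Finset.univ.sup' Finset.univ_nonempty (fun s => π s * C s o)

/-- Guessing error `G(π) = 1 − max_s π s`. -/
noncomputable def guessErr {S : Type*} [Fintype S] [Nonempty S] (π : S → ℝ) : ℝ :=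
  1 - Finset.univ.sup' Finset.univ_nonempty π

/-- Multiplicative Bayes risk leakage `β(π, C) = R*(π, C) / G(π)`. -/
noncomputable def betaL {S O : Type*} [Fintype S] [Nonempty S] [Fintype O]
    (π : S → ℝ) (C : S → O → ℝ) : ℝ :=
  bayesRisk π C / guessErr π

/-- The prior `π_{ab}` assigning 1/2 to each of `a` and `b` and 0 elsewhere. -/
noncomputable def pairPrior {S : Type*} [DecidableEq S] (a b : S) : S → ℝ :=
  fun s => if s = a ∨ s = b then 1 / 2 else 0

/-- Bayes security `β*(C)`: the minimum of `β(π_{ab}, C)` over distinct pairs `a ≠ b`. -/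
noncomputable def betaStar {S O : Type*} [Fintype S] [Nonempty S] [DecidableEq S] [Fintype O]
    (C : S → O → ℝ) (h : 1 < Fintype.card S) : ℝ :=
  (Finset.univ.filter (fun p : S × S => p.1 ≠ p.2)).inf'
    (by
      obtain ⟨a, b, hab⟩ := Fintype.exists_pair_of_one_lt_card h
      exact ⟨(a, b), by simp [hab]⟩)
    (fun p => betaL (pairPrior p.1 p.2) C)

/-- if `β(π, C) = 0` for a prior `π` with exactly `k` nonzero components
(`2 ≤ k ≤ n`, `n = |S| ≥ 2`), then for the uniform prior `υ`,
`β(υ, C) ≤ (1 − k/n)/(1 − 1/n)`. -/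
theorem beta_uniform_upper_bound {S O : Type*} [Fintype S] [Nonempty S]
    [Fintype O] [Nonempty O]
    (n k : ℕ) (hn : Fintype.card S = n) (hn2 : 2 ≤ n) (hk2 : 2 ≤ k) (hkn : k ≤ n)
    (C : S → O → ℝ) (hC : IsChannel C)
    (π : S → ℝ) (hπ : IsPrior π)
    (hsupp : (Finset.univ.filter fun s => 0 < π s).card = k)
    (hβ : betaL π C = 0) (hG : 0 < guessErr π) :
    betaL (fun _ => (1 : ℝ) / n) C ≤ (1 - (k : ℝ) / n) / (1 - 1 / n) := by
  classical
  obtain ⟨hC0, hC1⟩ := hC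
  obtain ⟨hπ0, hπ1⟩ := hπ
  have hn0 : (0:ℝ) < n := by
    have : (2:ℝ) ≤ n := by exact_mod_cast hn2
    linarith
  set supp := Finset.univ.filter (fun s => 0 < π s) with hsuppdef
  -- Bayes risk of π is zero
  have hR : bayesRisk π C = 0 := by
    unfold betaL at hβ
    rcases div_eq_zero_iff.mp hβ with h | h
    · exact h
    · exact absurd h (ne_of_gt hG)
  have hsum1 : ∑ o, Finset.univ.sup' Finset.univ_nonempty (fun s => π s * C s o) = 1 := by
    unfold bayesRisk at hR; linarith
  set g : O → ℝ := fun o => Finset.univ.sup' Finset.univ_nonempty (fun s => π s * C s o) with hg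
  have hgle : ∀ o, g o ≤ ∑ s, π s * C s o := by
    intro o
    obtain ⟨s0, _, hs0⟩ := Finset.exists_mem_eq_sup' Finset.univ_nonempty (fun s => π s * C s o)
    rw [hg]
    simp only []
    rw [hs0]
    exact Finset.single_le_sum (fun s _ => mul_nonneg (hπ0 s) (hC0 s o)) (Finset.mem_univ s0)
  have htot : ∑ o, ∑ s, π s * C s o = 1 := by
    rw [Finset.sum_comm]
    have : ∀ s : S, ∑ o, π s * C s o = π s := by
      intro s; rw [← Finset.mul_sum, hC1 s, mul_one]
    simp_rw [this]
    exact hπ1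
  have heq : ∀ o, ∑ s, π s * C s o = g o := by
    have h0 : ∑ o, (∑ s, π s * C s o - g o) = 0 := by
      rw [Finset.sum_sub_distrib, htot, hsum1]; ring
    have hz := (Finset.sum_eq_zero_iff_of_nonneg
      (fun o _ => sub_nonneg.mpr (hgle o))).mp h0
    intro o
    have := hz o (Finset.mem_univ o)
    linarith
  -- at most one support secret with positive channel entry per output
  have huniq : ∀ o, ∀ s1 ∈ supp, ∀ s2 ∈ supp, 0 < C s1 o → 0 < C s2 o → s1 = s2 := by
    intro o s1 hs1 s2 hs2 hp1 hp2
    by_contra hne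
    have hπ1p : 0 < π s1 := (Finset.mem_filter.mp hs1).2
    have hπ2p : 0 < π s2 := (Finset.mem_filter.mp hs2).2
    obtain ⟨st, _, hst⟩ := Finset.exists_mem_eq_sup' Finset.univ_nonempty (fun s => π s * C s o)
    -- pick sj ∈ {s1, s2} with sj ≠ st
    have : ∃ sj, sj ≠ st ∧ 0 < π sj * C sj o := by
      by_cases h1 : s1 = st
      · exact ⟨s2, by rw [← h1]; exact (Ne.symm hne), mul_pos hπ2p hp2⟩
      · exact ⟨s1, h1, mul_pos hπ1p hp1⟩
    obtain ⟨sj, hjne, hjpos⟩ := this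
    have hsplit : ∑ s, π s * C s o = π st * C st o + ∑ s ∈ Finset.univ.erase st, π s * C s o :=
      (Finset.add_sum_erase Finset.univ (fun s => π s * C s o) (Finset.mem_univ st)).symm
    have hrest : π sj * C sj o ≤ ∑ s ∈ Finset.univ.erase st, π s * C s o := by
      apply Finset.single_le_sum (fun s _ => mul_nonneg (hπ0 s) (hC0 s o))
      exact Finset.mem_erase.mpr ⟨hjne, Finset.mem_univ sj⟩
    have hgo : g o = π st * C st o := hst
    have := heq o
    rw [hsplit, hgo] at this
    linarith
  -- per-output: sum of channel over support ≤ max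
  have key : ∀ o, ∑ s ∈ supp, C s o ≤ Finset.univ.sup' Finset.univ_nonempty (fun s => C s o) := by
    intro o
    by_cases h : ∃ s ∈ supp, 0 < C s o
    · obtain ⟨s0, hs0, hpos⟩ := h
      have hsum : ∑ s ∈ supp, C s o = C s0 o := by
        apply Finset.sum_eq_single_of_mem s0 hs0
        intro s hs hne
        by_contra hzz
        have hp : 0 < C s o := lt_of_le_of_ne (hC0 s o) (Ne.symm hzz)
        exact hne (huniq o s hs s0 hs0 hp hpos)
      rw [hsum]
      exact Finset.le_sup' (fun s => C s o) (Finset.mem_univ s0)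
    · push_neg at h
      have hsum : ∑ s ∈ supp, C s o = 0 :=
        Finset.sum_eq_zero (fun s hs => le_antisymm (h s hs) (hC0 s o))
      rw [hsum]
      obtain ⟨s0⟩ := (inferInstance : Nonempty S)
      exact le_trans (hC0 s0 o) (Finset.le_sup' (fun s => C s o) (Finset.mem_univ s0))
  have hk : (k:ℝ) ≤ ∑ o, Finset.univ.sup' Finset.univ_nonempty (fun s => C s o) := by
    have h1 : (k:ℝ) = ∑ s ∈ supp, ∑ o, C s o := by
      simp_rw [hC1]
      rw [Finset.sum_const, hsupp]
      simp
    rw [h1, Finset.sum_comm]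
    exact Finset.sum_le_sum (fun o _ => key o)
  -- uniform prior computations
  have hsupu : ∀ o : O, (1/(n:ℝ)) * Finset.univ.sup' Finset.univ_nonempty (fun s => C s o)
      ≤ Finset.univ.sup' Finset.univ_nonempty (fun s => (1:ℝ)/n * C s o) := by
    intro o
    obtain ⟨s0, _, hs0⟩ := Finset.exists_mem_eq_sup' Finset.univ_nonempty (fun s => C s o)
    rw [hs0]
    exact Finset.le_sup' (fun s => (1:ℝ)/n * C s o) (Finset.mem_univ s0)
  have hRu : bayesRisk (fun _ => (1:ℝ)/n) C ≤ 1 - (k:ℝ)/n := by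
    unfold bayesRisk
    have h2 : (k:ℝ)/n ≤ ∑ o, Finset.univ.sup' Finset.univ_nonempty (fun s => (1:ℝ)/n * C s o) := by
      calc (k:ℝ)/n = (1/n) * k := by ring
      _ ≤ (1/n) * ∑ o, Finset.univ.sup' Finset.univ_nonempty (fun s => C s o) := by
          apply mul_le_mul_of_nonneg_left hk
          positivity
      _ = ∑ o, (1/n) * Finset.univ.sup' Finset.univ_nonempty (fun s => C s o) := by rw [Finset.mul_sum]
      _ ≤ _ := Finset.sum_le_sum (fun o _ => hsupu o)
    linarith
  have hGu : guessErr (fun _ : S => (1:ℝ)/n) = 1 - 1/n := by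
    unfold guessErr
    rw [Finset.sup'_const]
  have hGu0 : (0:ℝ) < 1 - 1/n := by
    have h1n : (1:ℝ)/n < 1 := by
      rw [div_lt_one hn0]
      have : (2:ℝ) ≤ n := by exact_mod_cast hn2
      linarith
    linarith
  unfold betaL
  rw [hGu]
  gcongr
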